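/- Let W be the generalized Witt algebra and c ∈ W⊗W⊗W an element satisfying a·c = 0 for all a ∈ W (adjoint diagonal action on the triple tensor product). Then c = 0. In other words, the space of W-invariants of W⊗W⊗W is trivial. -/

import Mathlib

open TensorProduct

section WittHelpers
variable {F : Type*} [Field F] {n : ℕ} {A : AddSubgroup (Fin n → F)}
  {L : Type*} [LieRing L] [LieAlgebra F L]
  (t : A → (Fin n → F) →ₗ[F] L)
  (ℬ : Module.Basis (A × Fin n) F L)

lemma witt_brkt
    (hℬ : ∀ (x : A) (i : Fin n), ℬ (x, i) = t x (Pi.single i 1))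
    (hbr : ∀ (x y : A) (d d' : Fin n → F),
      ⁅t x d, t y d'⁆ = t (x + y)
        ((∑ i, d i * (y : Fin n → F) i) • d' - (∑ i, d' i * (x : Fin n → F) i) • d))
    (a x : A) (d : Fin n → F) (i : Fin n) :
    ⁅t a d, ℬ (x, i)⁆ = (∑ m, d m * (x : Fin n → F) m) • ℬ (a + x, i)
      - (a : Fin n → F) i • ∑ m, d m • ℬ (a + x, m) := by
  classical
  rw [hℬ, hbr]
  have h1 : (∑ m, (Pi.single i 1 : Fin n → F) m * (a : Fin n → F) m) = (a : Fin n → F) i := by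
    rw [Finset.sum_eq_single i]
    · simp
    · intro b _ hb; simp [Pi.single_apply, hb]
    · simp
  have hd : (t (a + x)) d = ∑ m, d m • ℬ (a + x, m) := by
    conv_lhs => rw [show d = ∑ m, d m • (Pi.single m 1 : Fin n → F) by
      ext j; simp [Pi.single_apply, Finset.sum_apply, mul_ite]]
    rw [map_sum]
    simp [hℬ]
  rw [h1, map_sub, map_smul, map_smul, hd, ← hℬ]

lemma witt_brkt3
    (hw : ∀ (a x : A) (d : Fin n → F) (i : Fin n),
      ⁅t a d, ℬ (x, i)⁆ = (∑ m, d m * (x : Fin n → F) m) • ℬ (a + x, i)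
        - (a : Fin n → F) i • ∑ m, d m • ℬ (a + x, m))
    (a x y z : A) (d : Fin n → F) (i j k : Fin n) :
    ⁅t a d, ℬ (x,i) ⊗ₜ[F] (ℬ (y,j) ⊗ₜ[F] ℬ (z,k))⁆ =
      ((∑ m, d m * (x : Fin n → F) m) • (ℬ (a+x,i) ⊗ₜ[F] (ℬ (y,j) ⊗ₜ[F] ℬ (z,k)))
        - (a : Fin n → F) i • ∑ m, d m • (ℬ (a+x,m) ⊗ₜ[F] (ℬ (y,j) ⊗ₜ[F] ℬ (z,k))))
      + ((∑ m, d m * (y : Fin n → F) m) • (ℬ (x,i) ⊗ₜ[F] (ℬ (a+y,j) ⊗ₜ[F] ℬ (z,k)))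
        - (a : Fin n → F) j • ∑ m, d m • (ℬ (x,i) ⊗ₜ[F] (ℬ (a+y,m) ⊗ₜ[F] ℬ (z,k))))
      + ((∑ m, d m * (z : Fin n → F) m) • (ℬ (x,i) ⊗ₜ[F] (ℬ (y,j) ⊗ₜ[F] ℬ (a+z,k)))
        - (a : Fin n → F) k • ∑ m, d m • (ℬ (x,i) ⊗ₜ[F] (ℬ (y,j) ⊗ₜ[F] ℬ (a+z,m)))) := by
  rw [LieModule.lie_tmul_right, LieModule.lie_tmul_right, hw, hw, hw]
  simp only [TensorProduct.sub_tmul, TensorProduct.tmul_sub, ← TensorProduct.smul_tmul',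
    TensorProduct.tmul_smul, TensorProduct.sum_tmul, TensorProduct.tmul_sum,
    TensorProduct.tmul_add]
  abel

lemma witt_repr
    (hw3 : ∀ (a x y z : A) (d : Fin n → F) (i j k : Fin n),
      ⁅t a d, ℬ (x,i) ⊗ₜ[F] (ℬ (y,j) ⊗ₜ[F] ℬ (z,k))⁆ =
      ((∑ m, d m * (x : Fin n → F) m) • (ℬ (a+x,i) ⊗ₜ[F] (ℬ (y,j) ⊗ₜ[F] ℬ (z,k)))
        - (a : Fin n → F) i • ∑ m, d m • (ℬ (a+x,m) ⊗ₜ[F] (ℬ (y,j) ⊗ₜ[F] ℬ (z,k))))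
      + ((∑ m, d m * (y : Fin n → F) m) • (ℬ (x,i) ⊗ₜ[F] (ℬ (a+y,j) ⊗ₜ[F] ℬ (z,k)))
        - (a : Fin n → F) j • ∑ m, d m • (ℬ (x,i) ⊗ₜ[F] (ℬ (a+y,m) ⊗ₜ[F] ℬ (z,k))))
      + ((∑ m, d m * (z : Fin n → F) m) • (ℬ (x,i) ⊗ₜ[F] (ℬ (y,j) ⊗ₜ[F] ℬ (a+z,k)))
        - (a : Fin n → F) k • ∑ m, d m • (ℬ (x,i) ⊗ₜ[F] (ℬ (y,j) ⊗ₜ[F] ℬ (a+z,m)))))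
    (a x y z : A) (d : Fin n → F) (i j k : Fin n)
    (q : (A × Fin n) × (A × Fin n) × (A × Fin n)) :
    (ℬ.tensorProduct (ℬ.tensorProduct ℬ)).repr ⁅t a d, ℬ (x,i) ⊗ₜ[F] (ℬ (y,j) ⊗ₜ[F] ℬ (z,k))⁆ q =
      ((∑ m, d m * (x : Fin n → F) m) * (Finsupp.single ((a+x,i),(y,j),(z,k)) (1:F)) q
        - (a : Fin n → F) i * ∑ m, d m * (Finsupp.single ((a+x,m),(y,j),(z,k)) (1:F)) q)
      + ((∑ m, d m * (y : Fin n → F) m) * (Finsupp.single ((x,i),(a+y,j),(z,k)) (1:F)) q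
        - (a : Fin n → F) j * ∑ m, d m * (Finsupp.single ((x,i),(a+y,m),(z,k)) (1:F)) q)
      + ((∑ m, d m * (z : Fin n → F) m) * (Finsupp.single ((x,i),(y,j),(a+z,k)) (1:F)) q
        - (a : Fin n → F) k * ∑ m, d m * (Finsupp.single ((x,i),(y,j),(a+z,m)) (1:F)) q) := by
  have hbase : ∀ u v w : A × Fin n,
      ℬ u ⊗ₜ[F] (ℬ v ⊗ₜ[F] ℬ w) = (ℬ.tensorProduct (ℬ.tensorProduct ℬ)) (u, v, w) := by
    intro u v w; simp [Module.Basis.tensorProduct_apply]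
  rw [hw3]
  simp only [hbase, map_add, map_sub, map_smul, map_sum, Finsupp.add_apply, Finsupp.sub_apply,
    Finsupp.smul_apply, Finsupp.finset_sum_apply, Module.Basis.repr_self, smul_eq_mul]

lemma witt_exists_coord (hA : Submodule.span F (A : Set (Fin n → F)) = ⊤) (m : Fin n) :
    ∃ a₀ : A, (a₀ : Fin n → F) m ≠ 0 := by
  by_contra h
  push_neg at h
  have hsub : (A : Set (Fin n → F)) ⊆
      (LinearMap.ker (LinearMap.proj (R := F) (φ := fun _ : Fin n => F) m) : Set _) := by
    intro v hv
    simpa using h ⟨v, hv⟩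
  have hle := Submodule.span_le.mpr hsub
  rw [hA] at hle
  have h1 : (Pi.single m 1 : Fin n → F) ∈
      LinearMap.ker (LinearMap.proj (R := F) (φ := fun _ : Fin n => F) m) :=
    hle Submodule.mem_top
  simp [LinearMap.mem_ker] at h1

lemma witt_exists_good [CharZero F] (Bad : Finset A) (b : A) (m : Fin n) (r : F)
    (a₀ : A) (h₀ : (a₀ : Fin n → F) m ≠ 0) :
    ∃ a : A, a ∉ Bad ∧ b + a ∉ Bad ∧ (a : Fin n → F) m ≠ r := by
  classical
  set f : ℕ → A := fun k => (k + 1) • a₀ with hf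
  have hfm : ∀ k : ℕ, ((f k : A) : Fin n → F) m = ((k : F) + 1) * (a₀ : Fin n → F) m := by
    intro k
    have : ((f k : A) : Fin n → F) = (k + 1 : ℕ) • (a₀ : Fin n → F) := by
      simp [hf]
    rw [this]
    simp [nsmul_eq_mul]
  have hinj : Function.Injective f := by
    intro k l hkl
    have h1 : ((k : F) + 1) * (a₀ : Fin n → F) m = ((l : F) + 1) * (a₀ : Fin n → F) m := by
      rw [← hfm, ← hfm, hkl]
    have h2 : (k : F) + 1 = (l : F) + 1 := mul_right_cancel₀ h₀ h1
    have h3 : (k : F) = l := add_right_cancel h2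
    exact Nat.cast_injective h3
  have hfin : ({k : ℕ | f k ∈ Bad} ∪ {k : ℕ | b + f k ∈ Bad}
      ∪ {k : ℕ | ((f k : A) : Fin n → F) m = r}).Finite := by
    refine (Set.Finite.union (Set.Finite.union ?_ ?_) ?_)
    · exact Set.Finite.preimage (Function.Injective.injOn hinj) Bad.finite_toSet
    · exact Set.Finite.preimage
        (Function.Injective.injOn ((add_right_injective b).comp hinj)) Bad.finite_toSet
    · apply Set.Subsingleton.finite
      intro k hk l hl
      simp only [Set.mem_setOf_eq] at hk hl
      rw [hfm] at hk hl
      have h2 : (k : F) + 1 = (l : F) + 1 := mul_right_cancel₀ h₀ (hk.trans hl.symm)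
      have h3 : (k : F) = l := add_right_cancel h2
      exact Nat.cast_injective h3
  obtain ⟨k, hk⟩ := hfin.infinite_compl.nonempty
  simp only [Set.mem_compl_iff, Set.mem_union, Set.mem_setOf_eq, not_or] at hk
  exact ⟨f k, hk.1.1, hk.1.2, hk.2⟩

end WittHelpers

theorem witt_bialg_aux {F : Type*} [Field F] [CharZero F] {n : ℕ}
    {A : AddSubgroup (Fin n → F)}
    (hA : Submodule.span F (A : Set (Fin n → F)) = ⊤)
    {L : Type*} [LieRing L] [LieAlgebra F L]
    (t : A → (Fin n → F) →ₗ[F] L)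
    (ℬ : Module.Basis (A × Fin n) F L)
    (hℬ : ∀ (x : A) (i : Fin n), ℬ (x, i) = t x (Pi.single i 1))
    (hbr : ∀ (x y : A) (d d' : Fin n → F),
      ⁅t x d, t y d'⁆ = t (x + y)
        ((∑ i, d i * (y : Fin n → F) i) • d' - (∑ i, d' i * (x : Fin n → F) i) • d))
    (c : L ⊗[F] (L ⊗[F] L)) (hc : ∀ a : L, ⁅a, c⁆ = 0) :
    c = 0 := by
  classical
  have hw := witt_brkt t ℬ hℬ hbr
  have hw3 := witt_brkt3 t ℬ hw
  set B3 : Module.Basis ((A × Fin n) × (A × Fin n) × (A × Fin n)) F (L ⊗[F] (L ⊗[F] L)) :=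
    ℬ.tensorProduct (ℬ.tensorProduct ℬ) with hB3def
  set g := B3.repr c with hgdef
  have hrepr : ∀ (aL : L) (q : (A × Fin n) × (A × Fin n) × (A × Fin n)),
      (∑ p ∈ g.support, g p * (B3.repr ⁅aL, B3 p⁆) q) = 0 := by
    intro aL q
    have hc' : (∑ p ∈ g.support, g p • B3 p) = c := by
      conv_rhs => rw [← B3.linearCombination_repr c]
      rw [Finsupp.linearCombination_apply, Finsupp.sum]
    have h1 : ⁅aL, (∑ p ∈ g.support, g p • B3 p)⁆ = ∑ p ∈ g.support, g p • ⁅aL, B3 p⁆ := by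
      rw [← LieModule.toEnd_apply_apply F, map_sum]
      simp [LieModule.toEnd_apply_apply]
    have h2 : (∑ p ∈ g.support, g p • ⁅aL, B3 p⁆) = 0 := by
      rw [← h1, hc']
      exact hc aL
    have h3 := congrArg (fun v => (B3.repr v) q) h2
    simpa only [map_sum, map_smul, Finsupp.finset_sum_apply, Finsupp.smul_apply,
      smul_eq_mul, map_zero, Finsupp.zero_apply] using h3
  suffices hg0 : ∀ q, g q = 0 by
    have hzero : B3.repr c = 0 := by
      ext q; rw [← hgdef]; exact hg0 q
    exact (LinearEquiv.map_eq_zero_iff B3.repr).mp hzero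
  intro q
  obtain ⟨⟨x, i₀⟩, ⟨y, j'⟩, ⟨z, k'⟩⟩ := q
  set e : Fin n → ((A × Fin n) × (A × Fin n) × (A × Fin n)) :=
    fun i => ((x,i),(y,j'),(z,k')) with hedef
  have heinj : Function.Injective e := by
    intro i1 i2 h
    simpa [hedef, Prod.ext_iff] using h
  set C : Fin n → F := fun i => g (e i) with hCdef
  -- main equation from invariance
  have key : ∀ a : A, (∀ p ∈ g.support, p.1.1 ≠ x + a) → ∀ (d : Fin n → F) (i' : Fin n),
      (∑ m, d m * (x : Fin n → F) m) * C i' = (∑ i, (a : Fin n → F) i * C i) * d i' := by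
    intro a ha d i'
    set q' : (A × Fin n) × (A × Fin n) × (A × Fin n) := ((x + a, i'), (y, j'), (z, k')) with hq'
    have h0 := hrepr (t a d) q'
    -- vanishing off the image of e
    have hval : ∀ p ∈ g.support, p ∉ Finset.image e Finset.univ →
        g p * (B3.repr ⁅t a d, B3 p⁆) q' = 0 := by
      rintro ⟨⟨x₁, i⟩, ⟨y₁, j⟩, ⟨z₁, k⟩⟩ hp hpe
      have hx₁ : x₁ ≠ x + a := ha _ hp
      have hB3p : B3 ((x₁,i),(y₁,j),(z₁,k)) = ℬ (x₁,i) ⊗ₜ[F] (ℬ (y₁,j) ⊗ₜ[F] ℬ (z₁,k)) := by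
        simp [hB3def, Module.Basis.tensorProduct_apply]
      rw [hB3p, witt_repr t ℬ hw3 a x₁ y₁ z₁ d i j k q']
      have hmem : x₁ = x → y₁ = y → j = j' → z₁ = z → k = k' → False := by
        intro h1 h2 h3 h4 h5
        apply hpe
        subst h1; subst h2; subst h3; subst h4; subst h5
        exact Finset.mem_image.mpr ⟨i, Finset.mem_univ i, rfl⟩
      have d1 : (Finsupp.single ((a+x₁,i),(y₁,j),(z₁,k)) (1:F)) q' = 0 := by
        refine Finsupp.single_eq_of_ne' fun hcon => ?_
        rw [hq'] at hcon
        have h1 : a + x₁ = x + a := congrArg (fun r => r.1.1) hcon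
        rw [add_comm a x₁] at h1
        exact hmem (add_right_cancel h1) (congrArg (fun r => r.2.1.1) hcon)
          (congrArg (fun r => r.2.1.2) hcon) (congrArg (fun r => r.2.2.1) hcon)
          (congrArg (fun r => r.2.2.2) hcon)
      have d2 : ∀ m : Fin n, (Finsupp.single ((a+x₁,m),(y₁,j),(z₁,k)) (1:F)) q' = 0 := by
        intro m
        refine Finsupp.single_eq_of_ne' fun hcon => ?_
        rw [hq'] at hcon
        have h1 : a + x₁ = x + a := congrArg (fun r => r.1.1) hcon
        rw [add_comm a x₁] at h1
        exact hmem (add_right_cancel h1) (congrArg (fun r => r.2.1.1) hcon)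
          (congrArg (fun r => r.2.1.2) hcon) (congrArg (fun r => r.2.2.1) hcon)
          (congrArg (fun r => r.2.2.2) hcon)
      have d3 : (Finsupp.single ((x₁,i),(a+y₁,j),(z₁,k)) (1:F)) q' = 0 := by
        refine Finsupp.single_eq_of_ne' fun hcon => ?_
        rw [hq'] at hcon
        exact hx₁ (congrArg (fun r => r.1.1) hcon)
      have d4 : ∀ m : Fin n, (Finsupp.single ((x₁,i),(a+y₁,m),(z₁,k)) (1:F)) q' = 0 := by
        intro m
        refine Finsupp.single_eq_of_ne' fun hcon => ?_
        rw [hq'] at hcon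
        exact hx₁ (congrArg (fun r => r.1.1) hcon)
      have d5 : (Finsupp.single ((x₁,i),(y₁,j),(a+z₁,k)) (1:F)) q' = 0 := by
        refine Finsupp.single_eq_of_ne' fun hcon => ?_
        rw [hq'] at hcon
        exact hx₁ (congrArg (fun r => r.1.1) hcon)
      have d6 : ∀ m : Fin n, (Finsupp.single ((x₁,i),(y₁,j),(a+z₁,m)) (1:F)) q' = 0 := by
        intro m
        refine Finsupp.single_eq_of_ne' fun hcon => ?_
        rw [hq'] at hcon
        exact hx₁ (congrArg (fun r => r.1.1) hcon)
      simp only [d1, d2, d3, d4, d5, d6, mul_zero, Finset.sum_const_zero, sub_zero,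
        sub_self, add_zero, zero_add, zero_sub, neg_zero, zero_mul]
    -- value on the image of e
    have hval2 : ∀ i : Fin n, g (e i) * (B3.repr ⁅t a d, B3 (e i)⁆) q' =
        C i * ((∑ m, d m * (x : Fin n → F) m) * (if i = i' then 1 else 0)
          - (a : Fin n → F) i * d i') := by
      intro i
      have hCe : C i = g (e i) := rfl
      by_cases hp : e i ∈ g.support
      · have hxa : (x : A) ≠ x + a := ha (e i) hp
        have hB3e : B3 (e i) = ℬ (x,i) ⊗ₜ[F] (ℬ (y,j') ⊗ₜ[F] ℬ (z,k')) := by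
          simp [hB3def, hedef, Module.Basis.tensorProduct_apply]
        rw [hB3e, witt_repr t ℬ hw3 a x y z d i j' k' q']
        have e1 : (Finsupp.single ((a+x,i),(y,j'),(z,k')) (1:F)) q'
            = (if i = i' then (1:F) else 0) := by
          by_cases h : i = i'
          · rw [if_pos h, show ((a+x,i),(y,j'),(z,k')) = q' by rw [hq', h, add_comm a x],
              Finsupp.single_eq_same]
          · rw [if_neg h]
            exact Finsupp.single_eq_of_ne' fun hcon => h (congrArg (fun r => r.1.2) hcon)
        have e2 : (∑ m, d m * (Finsupp.single ((a+x,m),(y,j'),(z,k')) (1:F)) q') = d i' := by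
          rw [Finset.sum_eq_single i']
          · rw [show ((a+x,i'),(y,j'),(z,k')) = q' by rw [hq', add_comm a x],
              Finsupp.single_eq_same, mul_one]
          · intro m _ hm
            rw [Finsupp.single_eq_of_ne' fun hcon => hm (congrArg (fun r => r.1.2) hcon),
              mul_zero]
          · intro hm
            exact absurd (Finset.mem_univ i') hm
        have e3 : (Finsupp.single ((x,i),(a+y,j'),(z,k')) (1:F)) q' = 0 := by
          refine Finsupp.single_eq_of_ne' fun hcon => ?_
          rw [hq'] at hcon
          exact hxa (congrArg (fun r => r.1.1) hcon)
        have e4 : ∀ m : Fin n, (Finsupp.single ((x,i),(a+y,m),(z,k')) (1:F)) q' = 0 := by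
          intro m
          refine Finsupp.single_eq_of_ne' fun hcon => ?_
          rw [hq'] at hcon
          exact hxa (congrArg (fun r => r.1.1) hcon)
        have e5 : (Finsupp.single ((x,i),(y,j'),(a+z,k')) (1:F)) q' = 0 := by
          refine Finsupp.single_eq_of_ne' fun hcon => ?_
          rw [hq'] at hcon
          exact hxa (congrArg (fun r => r.1.1) hcon)
        have e6 : ∀ m : Fin n, (Finsupp.single ((x,i),(y,j'),(a+z,m)) (1:F)) q' = 0 := by
          intro m
          refine Finsupp.single_eq_of_ne' fun hcon => ?_
          rw [hq'] at hcon
          exact hxa (congrArg (fun r => r.1.1) hcon)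
        rw [e1, e2, hCe]
        simp only [e3, e4, e5, e6, mul_zero, Finset.sum_const_zero, sub_self, add_zero]
      · have hgz : g (e i) = 0 := Finsupp.notMem_support_iff.mp hp
        rw [hCe, hgz]
        ring
    -- reduce the sum to the image of e
    have hsum : (∑ p ∈ g.support, g p * (B3.repr ⁅t a d, B3 p⁆) q') =
        ∑ i, C i * ((∑ m, d m * (x : Fin n → F) m) * (if i = i' then 1 else 0)
          - (a : Fin n → F) i * d i') := by
      rw [Finset.sum_subset
        (Finset.subset_union_left (s₂ := Finset.image e Finset.univ))
        (fun p _ hp => by rw [Finsupp.notMem_support_iff.mp hp, zero_mul])]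
      rw [← Finset.sum_subset
        (Finset.subset_union_right (s₁ := g.support))
        (fun p hp hpe => hval p ((Finset.mem_union.mp hp).resolve_right hpe) hpe)]
      rw [Finset.sum_image (fun i1 _ i2 _ h => heinj h)]
      exact Finset.sum_congr rfl fun i _ => hval2 i
    rw [hsum] at h0
    have h6 : (∑ i, C i * ((∑ m, d m * (x : Fin n → F) m) * (if i = i' then 1 else 0)
        - (a : Fin n → F) i * d i')) =
        (∑ m, d m * (x : Fin n → F) m) * C i' - (∑ i, (a : Fin n → F) i * C i) * d i' := by
      simp only [mul_sub]
      rw [Finset.sum_sub_distrib]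
      congr 1
      · simp only [mul_ite, mul_one, mul_zero]
        rw [Finset.sum_ite_eq' Finset.univ i']
        simp [mul_comm]
      · rw [Finset.sum_mul]
        exact Finset.sum_congr rfl fun i _ => by ring
    rw [h6] at h0
    exact sub_eq_zero.mp h0
  -- Bad set and goodness
  set Bad : Finset A := g.support.image (fun p => p.1.1 - x) with hBaddef
  have hgood : ∀ a : A, a ∉ Bad → ∀ p ∈ g.support, p.1.1 ≠ x + a := by
    intro a haB p hp hcon
    exact haB (Finset.mem_image.mpr ⟨p, hp, by rw [hcon, add_sub_cancel_left]⟩)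
  suffices hCall : ∀ i, C i = 0 by exact hCall i₀
  by_cases hx : (x : Fin n → F) = 0
  · -- zero weight case
    have hdot : ∀ a : A, a ∉ Bad → (∑ i, (a : Fin n → F) i * C i) = 0 := by
      intro a haB
      have hk := key a (hgood a haB) (Pi.single i₀ 1) i₀
      have hL : (∑ m, (Pi.single i₀ 1 : Fin n → F) m * (x : Fin n → F) m) = 0 := by
        rw [hx]; simp
      have hR : (Pi.single i₀ 1 : Fin n → F) i₀ = 1 := Pi.single_eq_same i₀ 1
      rw [hL, hR, zero_mul, mul_one] at hk
      exact hk.symm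
    have hball : ∀ b : A, (∑ i, (b : Fin n → F) i * C i) = 0 := by
      intro b
      obtain ⟨a₀, ha₀⟩ := witt_exists_coord hA i₀
      obtain ⟨a, ha1, ha2, -⟩ := witt_exists_good Bad b i₀ 0 a₀ ha₀
      have h1 := hdot a ha1
      have h2 := hdot (b + a) ha2
      have h3 : (∑ i, ((b + a : A) : Fin n → F) i * C i) =
          (∑ i, (b : Fin n → F) i * C i) + ∑ i, (a : Fin n → F) i * C i := by
        rw [← Finset.sum_add_distrib]
        refine Finset.sum_congr rfl fun i _ => ?_
        have : ((b + a : A) : Fin n → F) i = (b : Fin n → F) i + (a : Fin n → F) i := by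
          simp
        rw [this]; ring
      linear_combination h2 - h3 - h1
    intro i
    have hsp : ∀ v ∈ Submodule.span F (A : Set (Fin n → F)), (∑ m, v m * C m) = 0 := by
      intro v hv
      induction hv using Submodule.span_induction with
      | mem v hv => exact hball ⟨v, hv⟩
      | zero => simp
      | add u v _ _ hu hv => simp [add_mul, Finset.sum_add_distrib, hu, hv]
      | smul r v _ hv =>
          simp only [Pi.smul_apply, smul_eq_mul, mul_assoc, ← Finset.mul_sum, hv, mul_zero]
    have hone := hsp (Pi.single i 1) (by rw [hA]; trivial)
    have : (∑ m, (Pi.single i 1 : Fin n → F) m * C m) = C i := by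
      rw [Finset.sum_eq_single i]
      · simp
      · intro b _ hb; simp [Pi.single_apply, hb]
      · simp
    rw [this] at hone
    exact hone
  · -- nonzero weight case
    obtain ⟨m, hm⟩ : ∃ m, (x : Fin n → F) m ≠ 0 := by
      by_contra h; push_neg at h; exact hx (funext h)
    obtain ⟨a₀, ha₀⟩ := witt_exists_coord hA m
    obtain ⟨a, haB, -, ham⟩ := witt_exists_good Bad 0 m ((x : Fin n → F) m) a₀ ha₀
    have hk := key a (hgood a haB)
    have hL : (∑ mm, (Pi.single m 1 : Fin n → F) mm * (x : Fin n → F) mm)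
        = (x : Fin n → F) m := by
      rw [Finset.sum_eq_single m]
      · simp
      · intro b _ hb; simp [Pi.single_apply, hb]
      · simp
    have hCm : ∀ i', i' ≠ m → C i' = 0 := by
      intro i' hi'
      have h1 := hk (Pi.single m 1) i'
      rw [hL, Pi.single_eq_of_ne hi' 1, mul_zero] at h1
      exact (mul_eq_zero.mp h1).resolve_left hm
    have hCmm : C m = 0 := by
      have h1 := hk (Pi.single m 1) m
      rw [hL, Pi.single_eq_same m 1, mul_one] at h1
      have hsum : (∑ i, (a : Fin n → F) i * C i) = (a : Fin n → F) m * C m := by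
        rw [Finset.sum_eq_single m]
        · intro b _ hb; rw [hCm b hb, mul_zero]
        · intro hb; exact absurd (Finset.mem_univ m) hb
      rw [hsum] at h1
      have h2 : ((x : Fin n → F) m - (a : Fin n → F) m) * C m = 0 := by
        linear_combination h1
      exact (mul_eq_zero.mp h2).resolve_left (sub_ne_zero.mpr (Ne.symm ham))
    intro i
    by_cases h : i = m
    · rw [h]; exact hCmm
    · exact hCm i h

/-- For the generalized Witt algebra `W`, if `c ∈ W ⊗ W ⊗ W` satisfies
`a · c = 0` for all `a ∈ W` (adjoint diagonal action), then `c = 0`: the space of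
`W`-invariants in `W ⊗ W ⊗ W` is trivial. -/
theorem witt_bialg_stmt12 {F : Type*} [Field F] [CharZero F] {n : ℕ}
    {A : AddSubgroup (Fin n → F)}
    (hA : Submodule.span F (A : Set (Fin n → F)) = ⊤)
    {L : Type*} [LieRing L] [LieAlgebra F L]
    (t : A → (Fin n → F) →ₗ[F] L)
    (ℬ : Module.Basis (A × Fin n) F L)
    (hℬ : ∀ (x : A) (i : Fin n), ℬ (x, i) = t x (Pi.single i 1))
    (hbr : ∀ (x y : A) (d d' : Fin n → F),
      ⁅t x d, t y d'⁆ = t (x + y)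
        ((∑ i, d i * (y : Fin n → F) i) • d' - (∑ i, d' i * (x : Fin n → F) i) • d))
    (c : L ⊗[F] L ⊗[F] L) (hc : ∀ a : L, ⁅a, c⁆ = 0) :
    c = 0 := by
  have hcomm : ∀ (a : L) (c : L ⊗[F] L ⊗[F] L),
      ⁅a, TensorProduct.assoc F L L L c⁆ = TensorProduct.assoc F L L L ⁅a, c⁆ := by
    intro a c
    induction c using TensorProduct.induction_on with
    | zero => simp
    | tmul u w =>
      induction u using TensorProduct.induction_on with
      | zero => simp
      | tmul x y =>
        simp only [TensorProduct.assoc_tmul, LieModule.lie_tmul_right, map_add,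
          TensorProduct.tmul_add, TensorProduct.add_tmul]
        abel
      | add u v hu hv =>
        simp only [TensorProduct.add_tmul, lie_add, map_add, hu, hv]
    | add u v hu hv => simp only [lie_add, map_add, hu, hv]
  have h0 := witt_bialg_aux hA t ℬ hℬ hbr (TensorProduct.assoc F L L L c)
    (fun a => by rw [hcomm, hc a, map_zero])
  exact (LinearEquiv.map_eq_zero_iff _).mp h0
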